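/- arXiv:2107.07232 — 2 statements merged into one kernel-verified Lean document; each statement's English description precedes it below -/
import Mathlib

section
/- Among all centers c ∈ ℝ^d, the standard Gaussian measure of the ball B_{r,c} of radius r centered at c is maximized at c = 0: Q(B_{r,c}) ≤ Q(B_{r,0}) for all c. -/
open MeasureTheory Metric Real

noncomputable section

abbrev E (d : ℕ) := EuclideanSpace ℝ (Fin d)

def stdGaussian (d : ℕ) : Measure (E d) :=
  volume.withDensity (fun z => ENNReal.ofReal ((2 * π) ^ (-(d : ℝ) / 2) * Real.exp (-‖z‖ ^ 2 / 2)))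

def tvDist {Ω : Type*} [MeasurableSpace Ω] (P Q : Measure Ω) : ℝ :=
  ⨆ A : {s : Set Ω // MeasurableSet s}, |(P A.1).toReal - (Q A.1).toReal|

section Aux

open intervalIntegral


lemma gauss_int_symm (L b : ℝ) :
    ∫ t in (b-L)..(b+L), exp (-t^2/2) = ∫ t in (-b-L)..(-b+L), exp (-t^2/2) := by
  have h := intervalIntegral.integral_comp_neg (a := b-L) (b := b+L)
    (fun t => exp (-t^2/2))
  simp only [neg_sq] at h
  rw [h, show (-(b+L) : ℝ) = -b-L by ring, show (-(b-L) : ℝ) = -b+L by ring]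

lemma core (L : ℝ) (hL : 0 ≤ L) (a : ℝ) :
    ∫ t in (a-L)..(a+L), exp (-t^2/2) ≤ ∫ t in (0-L)..(0+L), exp (-t^2/2) := by
  have hcont : Continuous fun t : ℝ => exp (-t^2/2) := by continuity
  have hint : ∀ u v : ℝ, IntervalIntegrable (fun t => exp (-t^2/2)) volume u v :=
    fun u v => hcont.intervalIntegrable u v
  set G : ℝ → ℝ := fun u => ∫ t in (0:ℝ)..u, exp (-t^2/2) with hGdef
  have hG : ∀ u, HasDerivAt G (exp (-u^2/2)) u := by
    intro u
    exact (hcont.integral_hasStrictDerivAt 0 u).hasDerivAt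
  have hPhi : ∀ b : ℝ, ∫ t in (b-L)..(b+L), exp (-t^2/2) = G (b+L) - G (b-L) := by
    intro b
    rw [hGdef]
    rw [← intervalIntegral.integral_interval_sub_left (hint 0 (b+L)) (hint 0 (b-L))]
  have hH : ∀ b : ℝ, HasDerivAt (fun b => G (b+L) - G (b-L))
      (exp (-(b+L)^2/2) - exp (-(b-L)^2/2)) b := by
    intro b
    have h1 : HasDerivAt (fun b : ℝ => G (b+L)) (exp (-(b+L)^2/2)) b := by
      simpa [Function.comp_def] using (hG (b+L)).comp b ((hasDerivAt_id b).add_const L)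
    have h2 : HasDerivAt (fun b : ℝ => G (b-L)) (exp (-(b-L)^2/2)) b := by
      simpa [Function.comp_def] using (hG (b-L)).comp b ((hasDerivAt_id b).sub_const L)
    exact h1.sub h2
  have hanti : AntitoneOn (fun b => G (b+L) - G (b-L)) (Set.Ici 0) := by
    apply antitoneOn_of_deriv_nonpos (convex_Ici 0)
    · exact fun b _ => ((hH b).differentiableAt).continuousAt.continuousWithinAt
    · exact fun b _ => ((hH b).differentiableAt).differentiableWithinAt
    · intro b hb
      rw [(hH b).deriv]
      have hb' : 0 < b := by
        rw [interior_Ici] at hb; simpa using hb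
      have h2 : (b - L)^2 ≤ (b + L)^2 := by nlinarith
      have := Real.exp_le_exp.2 (by linarith : -(b+L)^2/2 ≤ -(b-L)^2/2)
      linarith
  rcases le_or_gt 0 a with ha | ha
  · rw [hPhi a, hPhi 0]
    exact hanti (Set.mem_Ici.2 le_rfl) (Set.mem_Ici.2 ha) ha
  · rw [gauss_int_symm L a, hPhi 0]
    rw [show (-a-L : ℝ) = (-a) - L from rfl, show (-a+L : ℝ) = (-a) + L from rfl, hPhi (-a)]
    exact hanti (Set.mem_Ici.2 le_rfl) (Set.mem_Ici.2 (by linarith)) (by linarith)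

lemma oneDim (K R a : ℝ) (hK : 0 ≤ K) :
    ∫⁻ t, (if (t - a)^2 ≤ R then ENNReal.ofReal (K * exp (-t^2/2)) else 0) ∂volume
      ≤ ∫⁻ t, (if t^2 ≤ R then ENNReal.ofReal (K * exp (-t^2/2)) else 0) ∂volume := by
  have hcont : Continuous fun t : ℝ => K * exp (-t^2/2) := by continuity
  rcases lt_or_ge R 0 with hR | hR
  · have : ∀ t : ℝ, ¬ ((t - a)^2 ≤ R) := fun t h => absurd (le_trans (sq_nonneg _) h) (not_le.2 hR)
    simp only [this, if_false]
    simp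
  · set L := Real.sqrt R with hL
    have hL0 : 0 ≤ L := Real.sqrt_nonneg R
    have hmem : ∀ b t : ℝ, ((t - b)^2 ≤ R ↔ t ∈ Set.Icc (b - L) (b + L)) := by
      intro b t
      rw [← Real.sq_sqrt hR, ← hL, Set.mem_Icc]
      constructor
      · intro h; constructor <;> nlinarith
      · rintro ⟨h1, h2⟩; nlinarith
    have key : ∀ b : ℝ,
        (∫⁻ t, (if (t - b)^2 ≤ R then ENNReal.ofReal (K * exp (-t^2/2)) else 0) ∂volume)
          = ENNReal.ofReal (∫ t in (b-L)..(b+L), K * exp (-t^2/2)) := by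
      intro b
      have : ∀ t : ℝ, (if (t - b)^2 ≤ R then ENNReal.ofReal (K * exp (-t^2/2)) else 0)
          = Set.indicator (Set.Icc (b-L) (b+L)) (fun t => ENNReal.ofReal (K * exp (-t^2/2))) t := by
        intro t
        rw [Set.indicator_apply]
        simp only [hmem b t]
      simp_rw [this]
      rw [lintegral_indicator measurableSet_Icc,
        ← ofReal_integral_eq_lintegral_ofReal (hcont.integrableOn_Icc)
          (Filter.Eventually.of_forall fun t => by positivity),
        intervalIntegral.integral_of_le (by linarith : b - L ≤ b + L),
        integral_Icc_eq_integral_Ioc]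
    have k0 : (∫⁻ t, (if t^2 ≤ R then ENNReal.ofReal (K * exp (-t^2/2)) else 0) ∂volume)
        = ENNReal.ofReal (∫ t in (0-L)..(0+L), K * exp (-t^2/2)) := by
      rw [← key 0]; simp_rw [sub_zero]
    rw [key a, k0]
    apply ENNReal.ofReal_le_ofReal
    rw [intervalIntegral.integral_const_mul, intervalIntegral.integral_const_mul]
    exact mul_le_mul_of_nonneg_left (core L hL0 a) hK

noncomputable def fF (d : ℕ) (K R : ℝ) (c : Fin d → ℝ) : (Fin d → ℝ) → ENNReal :=
  fun x => if (∑ i, (x i - c i)^2) ≤ R then ENNReal.ofReal (K * exp (-(∑ i, (x i)^2)/2)) else 0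

lemma fF_meas (d : ℕ) (K R : ℝ) (c : Fin d → ℝ) : Measurable (fF d K R c) := by
  unfold fF
  apply Measurable.ite
  · apply measurableSet_le
    · exact Finset.measurable_sum _ fun i _ => by fun_prop
    · exact measurable_const
  · apply Measurable.ennreal_ofReal
    apply Measurable.const_mul
    apply Real.measurable_exp.comp
    apply Measurable.div_const
    apply Measurable.neg
    exact Finset.measurable_sum _ fun i _ => by fun_prop
  · exact measurable_const

lemma sum_update (d : ℕ) (x c : Fin d → ℝ) (i : Fin d) (t : ℝ) :
    ∑ j, (Function.update x i t j - c j)^2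
      = (t - c i)^2 + ∑ j ∈ Finset.univ.erase i, (x j - c j)^2 := by
  rw [← Finset.add_sum_erase _ (fun j => (Function.update x i t j - c j)^2) (Finset.mem_univ i)]
  congr 1
  · simp
  · exact Finset.sum_congr rfl fun j hj => by
      rw [Function.update_of_ne (Finset.ne_of_mem_erase hj)]

lemma step (d : ℕ) (K R : ℝ) (hK : 0 ≤ K) (c : Fin d → ℝ) (i : Fin d) :
    ∫⁻ x, fF d K R c x ∂(Measure.pi fun _ => volume)
      ≤ ∫⁻ x, fF d K R (Function.update c i 0) x ∂(Measure.pi fun _ => volume) := by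
  apply lintegral_le_of_lmarginal_le {i} (fF_meas d K R c) (fF_meas d K R _)
  rw [lmarginal_singleton, lmarginal_singleton]
  intro x
  set S := ∑ j ∈ Finset.univ.erase i, (x j - c j)^2 with hS
  set T := ∑ j ∈ Finset.univ.erase i, (x j)^2 with hT
  have hsq : ∀ t : ℝ, ∑ j, (Function.update x i t j)^2 = t^2 + T := by
    intro t
    have h := sum_update d x (fun _ => 0) i t
    simp only [sub_zero] at h
    exact h
  have hS' : ∑ j ∈ Finset.univ.erase i, (x j - Function.update c i 0 j)^2 = S := by
    exact Finset.sum_congr rfl fun j hj => by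
      rw [Function.update_of_ne (Finset.ne_of_mem_erase hj)]
  have e1 : ∀ t : ℝ, fF d K R c (Function.update x i t)
      = (if (t - c i)^2 ≤ R - S then ENNReal.ofReal ((K * exp (-T/2)) * exp (-t^2/2)) else 0) := by
    intro t
    unfold fF
    rw [sum_update, hsq, ← hS]
    congr 1
    · exact propext ⟨fun h => by linarith, fun h => by linarith⟩
    · congr 1
      rw [mul_assoc, ← Real.exp_add]
      congr 2
      ring
  have e2 : ∀ t : ℝ, fF d K R (Function.update c i 0) (Function.update x i t)
      = (if t^2 ≤ R - S then ENNReal.ofReal ((K * exp (-T/2)) * exp (-t^2/2)) else 0) := by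
    intro t
    unfold fF
    rw [sum_update, hsq, hS', Function.update_self]
    congr 1
    · exact propext ⟨fun h => by linarith, fun h => by linarith⟩
    · congr 1
      rw [mul_assoc, ← Real.exp_add]
      congr 2
      ring
  simp_rw [e1, e2]
  exact oneDim (K * exp (-T/2)) (R - S) (c i) (by positivity)

lemma allcoords (d : ℕ) (K R : ℝ) (hK : 0 ≤ K) (c : Fin d → ℝ) :
    ∫⁻ x, fF d K R c x ∂(Measure.pi fun _ => volume)
      ≤ ∫⁻ x, fF d K R (fun _ => 0) x ∂(Measure.pi fun _ => volume) := by
  have main : ∀ s : Finset (Fin d),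
      ∫⁻ x, fF d K R c x ∂(Measure.pi fun _ => volume)
        ≤ ∫⁻ x, fF d K R (fun j => if j ∈ s then 0 else c j) x ∂(Measure.pi fun _ => volume) := by
    intro s
    induction s using Finset.induction with
    | empty => simp
    | @insert i s hi ih =>
      refine ih.trans ?_
      have h : (fun j => if j ∈ insert i s then 0 else c j)
          = Function.update (fun j => if j ∈ s then 0 else c j) i 0 := by
        funext j
        by_cases hj : j = i
        · subst hj; simp
        · simp [Function.update_of_ne hj, Finset.mem_insert, hj]
      rw [h]
      exact step d K R hK _ i
  have h := main Finset.univ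
  simpa using h

end Aux

theorem stmt6 (d : ℕ) (r : ℝ) (c : E d) :
    stdGaussian d (closedBall c r) ≤ stdGaussian d (closedBall 0 r) := by
  rcases lt_or_ge r 0 with hr | hr
  · simp [Metric.closedBall_eq_empty.2 hr]
  set C := (2 * π) ^ (-(d : ℝ) / 2) with hCdef
  have hC : 0 ≤ C := Real.rpow_nonneg (by positivity) _
  have hdens : Measurable fun z : E d => ENNReal.ofReal (C * exp (-‖z‖ ^ 2 / 2)) := by
    apply Measurable.ennreal_ofReal
    exact (Continuous.measurable (by continuity))
  set e := (MeasurableEquiv.toLp 2 (Fin d → ℝ)).symm with he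
  have mp : MeasurePreserving e.symm (volume : Measure (Fin d → ℝ)) (volume : Measure (E d)) :=
    (EuclideanSpace.volume_preserving_symm_measurableEquiv_toLp (Fin d)).symm
  have key : ∀ b : E d, stdGaussian d (closedBall b r)
      = ∫⁻ x, fF d C (r^2) (fun i => b i) x ∂(Measure.pi fun _ => volume) := by
    intro b
    rw [stdGaussian, withDensity_apply _ measurableSet_closedBall,
      ← lintegral_indicator measurableSet_closedBall]
    rw [← mp.lintegral_comp (hdens.indicator measurableSet_closedBall)]
    rw [← MeasureTheory.volume_pi]
    apply lintegral_congr
    intro x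
    have hsx : ∀ i, (e.symm x) i = x i := fun i => rfl
    classical
    rw [Set.indicator_apply]
    unfold fF
    have hmem : e.symm x ∈ closedBall b r ↔ (∑ i, (x i - b i)^2) ≤ r^2 := by
      rw [Metric.mem_closedBall, EuclideanSpace.dist_eq]
      simp_rw [hsx, Real.dist_eq, sq_abs]
      constructor
      · intro h
        have h0 : 0 ≤ ∑ i, (x i - b i)^2 := Finset.sum_nonneg fun i _ => sq_nonneg _
        calc ∑ i, (x i - b i)^2 = Real.sqrt (∑ i, (x i - b i)^2) ^ 2 := (Real.sq_sqrt h0).symm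
        _ ≤ r ^ 2 := by
            apply pow_le_pow_left₀ (Real.sqrt_nonneg _) h
      · intro h
        calc Real.sqrt (∑ i, (x i - b i)^2) ≤ Real.sqrt (r^2) := Real.sqrt_le_sqrt h
        _ = r := Real.sqrt_sq hr
    have hnorm : ‖e.symm x‖ ^ 2 = ∑ i, (x i)^2 := by
      rw [EuclideanSpace.norm_eq]
      simp_rw [hsx, Real.norm_eq_abs, sq_abs]
      exact Real.sq_sqrt (Finset.sum_nonneg fun i _ => sq_nonneg _)
    by_cases hmem' : e.symm x ∈ closedBall b r
    · rw [if_pos hmem', if_pos (hmem.1 hmem'), hnorm]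
    · rw [if_neg hmem', if_neg (fun h => hmem' (hmem.2 h))]
  rw [key c, key 0]
  have h0 : (fun i : Fin d => (0 : E d) i) = (fun _ => (0:ℝ)) := by
    funext i; rfl
  rw [h0]
  exact allcoords d C (r^2) hC _
end
end

section
/- Let F : ℝ^d → ℝ^d be a bijection with F⁻¹ L₂-Lipschitz, Q the standard Gaussian measure, P̂(A) = Q(F(A)), and P* any probability measure. Then for every R > 0, D_TV(P*, P̂) ≥ γ(d/2, R²/(2L₂²))/Γ(d/2) − P*(B_{R, F⁻¹(0)}). In particular, if P*(B_{R,F⁻¹(0)}) < γ(d/2, R²/(2L₂²))/Γ(d/2), then D_TV(P*, P̂) > 0. -/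
open MeasureTheory Metric Real

noncomputable section

def lowerIncGamma (s x : ℝ) : ℝ := ∫ t in (0 : ℝ)..x, t ^ (s - 1) * Real.exp (-t)

open Set

lemma integrable_gauss (d : ℕ) : Integrable (fun z : E d => Real.exp (-‖z‖ ^ 2 / 2)) := by
  have h := (GaussianFourier.integrable_cexp_neg_mul_sq_norm_add (V := E d) (b := (1/2:ℂ))
    (by norm_num) 0 (0 : E d)).norm
  have he : ∀ z : E d, ‖Complex.exp (-(1/2:ℂ) * (‖z‖:ℂ)^2 + 0 * (inner ℝ (0 : E d) z : ℝ))‖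
      = Real.exp (-‖z‖ ^ 2 / 2) := by
    intro z
    rw [Complex.norm_exp]
    congr 1
    simp [Complex.add_re, Complex.mul_re]
    rw [← Complex.ofReal_pow, Complex.ofReal_re]; ring
  exact h.congr (by filter_upwards with z using (he z))

lemma ptwise (d : ℕ) (hd : 1 ≤ d) {y : ℝ} (hy : 0 < y) :
    (y:ℝ)^(d-1) * Real.exp (-y^2/2)
      = 2 ^ ((d:ℝ)/2 - 1) * ((y^2/2) ^ ((d:ℝ)/2 - 1) * Real.exp (-(y^2/2)) * y) := by
  have h1 : ((y:ℝ)^2/2) ^ ((d:ℝ)/2 - 1) = (y^2) ^ ((d:ℝ)/2 - 1) / 2 ^ ((d:ℝ)/2 - 1) :=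
    Real.div_rpow (sq_nonneg y) (by norm_num : (0:ℝ) ≤ 2) _
  have h2 : ((y:ℝ)^2) ^ ((d:ℝ)/2 - 1) = y ^ (2 * ((d:ℝ)/2 - 1)) := by
    rw [← Real.rpow_natCast y 2, ← Real.rpow_mul hy.le]
    norm_num
  have h3 : y ^ (2 * ((d:ℝ)/2 - 1)) * y = y ^ ((d:ℝ) - 1) := by
    nth_rewrite 2 [← Real.rpow_one y]
    rw [← Real.rpow_add hy]
    ring_nf
  have h4 : y ^ ((d:ℝ) - 1) = y ^ (d - 1) := by
    rw [← Real.rpow_natCast y (d-1)]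
    congr 1
    rw [Nat.cast_sub hd, Nat.cast_one]
  have h2pos : (0:ℝ) < 2 ^ ((d:ℝ)/2 - 1) := Real.rpow_pos_of_pos two_pos _
  rw [h1, h2, neg_div]
  field_simp
  rw [← h4, ← h3, mul_comm]
  congr 2
  ring

lemma sub_lemma (d : ℕ) (hd : 1 ≤ d) {r : ℝ} (hr : 0 < r) :
    ∫ y in (0:ℝ)..r, (y:ℝ) ^ (d-1) * Real.exp (-y^2/2)
      = 2 ^ ((d:ℝ)/2 - 1) * lowerIncGamma ((d:ℝ)/2) (r^2/2) := by
  have hs : (0:ℝ) < (d:ℝ)/2 := by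
    have : (0:ℝ) < (d:ℝ) := by exact_mod_cast hd
    linarith
  set g : ℝ → ℝ := fun t => t ^ ((d:ℝ)/2 - 1) * Real.exp (-t) with hg
  set f : ℝ → ℝ := fun y => y^2/2 with hfdef
  have hmin : min (0:ℝ) r = 0 := min_eq_left hr.le
  have hmax : max (0:ℝ) r = r := max_eq_right hr.le
  have hf : ContinuousOn f (Set.uIcc 0 r) := ((continuous_pow 2).div_const 2).continuousOn
  have hff' : ∀ x ∈ Ioo (min (0:ℝ) r) (max 0 r), HasDerivWithinAt f x (Ioi x) x := by
    intro x _
    have : HasDerivAt f x x := by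
      simpa using (hasDerivAt_pow 2 x).div_const 2
    exact this.hasDerivWithinAt
  have hgIoi : ContinuousOn g (Ioi 0) := by
    intro t ht
    exact ((Real.continuousAt_rpow_const t _ (Or.inl (ne_of_gt ht))).mul
      (Real.continuous_exp.continuousAt.comp (continuous_neg.continuousAt))).continuousWithinAt
  have hg_cont : ContinuousOn g (f '' Ioo (min (0:ℝ) r) (max 0 r)) := by
    refine hgIoi.mono ?_
    rintro _ ⟨y, hy, rfl⟩
    rw [hmin, hmax] at hy
    exact div_pos (pow_pos hy.1 2) two_pos
  have hg1 : IntegrableOn g (f '' (Set.uIcc 0 r)) := by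
    have hsub : f '' (Set.uIcc 0 r) ⊆ Icc 0 (r^2/2) := by
      rintro _ ⟨y, hy, rfl⟩
      rw [uIcc_of_le hr.le] at hy
      have h1 : y^2 ≤ r^2 := pow_le_pow_left₀ hy.1 hy.2 2
      simp only [hfdef]
      exact ⟨by positivity, by linarith⟩
    refine IntegrableOn.mono_set ?_ hsub
    rw [integrableOn_Icc_iff_integrableOn_Ioc]
    exact ((Real.GammaIntegral_convergent hs).mono_set Ioc_subset_Ioi_self).congr_fun
      (fun t ht => mul_comm _ _) measurableSet_Ioc
  have hg2 : IntegrableOn (fun y => (g ∘ f) y * y) (Set.uIcc 0 r) := by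
    rw [uIcc_of_le hr.le]
    have hcont : Continuous fun y : ℝ => (y:ℝ)^(d-1) * Real.exp (-y^2/2) / 2 ^ ((d:ℝ)/2 - 1) := by
      continuity
    refine (hcont.integrableOn_Icc).congr ?_
    have h0 : ∀ᵐ (y:ℝ) ∂(volume.restrict (Icc (0:ℝ) r)), y ≠ 0 := by
      refine ae_restrict_of_ae ?_
      rw [ae_iff]
      have : {y : ℝ | ¬ y ≠ 0} = {0} := by ext; simp
      rw [this]
      exact measure_singleton 0
    filter_upwards [h0, ae_restrict_mem measurableSet_Icc] with y hy hmem
    have hy0 : 0 < y := lt_of_le_of_ne hmem.1 (Ne.symm hy)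
    have h2pos : (0:ℝ) < 2 ^ ((d:ℝ)/2 - 1) := Real.rpow_pos_of_pos two_pos _
    have := ptwise d hd hy0
    simp only [Function.comp, hg, hfdef]
    rw [div_eq_iff (ne_of_gt h2pos), this]
    ring
  have key := intervalIntegral.integral_comp_mul_deriv''' hf hff' hg_cont hg1 hg2
  have hf0 : f 0 = 0 := by simp [hfdef]
  have hfr : f r = r^2/2 := rfl
  rw [hf0, hfr] at key
  have hLHS : ∫ y in (0:ℝ)..r, (y:ℝ) ^ (d-1) * Real.exp (-y^2/2)
      = 2 ^ ((d:ℝ)/2 - 1) * ∫ y in (0:ℝ)..r, (g ∘ f) y * y := by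
    rw [intervalIntegral.integral_of_le hr.le, intervalIntegral.integral_of_le hr.le,
      ← MeasureTheory.integral_const_mul]
    refine setIntegral_congr_fun measurableSet_Ioc ?_
    intro y hy
    exact ptwise d hd hy.1
  rw [hLHS, key]
  rfl

lemma stdGaussian_closedBall (d : ℕ) (hd : 1 ≤ d) {r : ℝ} (hr : 0 < r) :
    stdGaussian d (closedBall (0 : E d) r)
      = ENNReal.ofReal (lowerIncGamma ((d:ℝ)/2) (r^2/2) / Real.Gamma ((d:ℝ)/2)) := by
  haveI : Nonempty (Fin d) := ⟨⟨0, hd⟩⟩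
  haveI : Nontrivial (E d) := by
    refine ⟨0, EuclideanSpace.single ⟨0, hd⟩ (1:ℝ), fun h => ?_⟩
    have := congrArg norm h
    simp [EuclideanSpace.norm_single] at this
  have hdpos : (0:ℝ) < (d:ℝ) := by exact_mod_cast hd
  have hs : (0:ℝ) < (d:ℝ)/2 := by linarith
  have hdim : Module.finrank ℝ (E d) = d := finrank_euclideanSpace_fin
  have hcont : Continuous fun z : E d => (2*π)^(-(d:ℝ)/2) * Real.exp (-‖z‖^2/2) := by
    continuity
  rw [stdGaussian, withDensity_apply _ measurableSet_closedBall,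
    ← ofReal_integral_eq_lintegral_ofReal
      (hcont.continuousOn.integrableOn_compact (isCompact_closedBall _ _))
      (ae_of_all _ fun z => by positivity)]
  congr 1
  rw [MeasureTheory.integral_const_mul]
  have hind : ∫ z in closedBall (0:E d) r, Real.exp (-‖z‖^2/2)
      = ∫ z : E d, Set.indicator (Iic r) (fun y => Real.exp (-y^2/2)) ‖z‖ := by
    rw [← integral_indicator measurableSet_closedBall]
    congr 1; ext z
    by_cases h : ‖z‖ ≤ r
    · simp [Set.indicator, mem_closedBall_zero_iff, h]
    · simp [Set.indicator, mem_closedBall_zero_iff, h]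
  have hpolar := integral_fun_norm_addHaar (volume : Measure (E d))
    (fun y => Set.indicator (Iic r) (fun y => Real.exp (-y^2/2)) y)
  rw [hdim] at hpolar
  have hIoi : ∫ y in Ioi (0:ℝ), y ^ (d-1) • Set.indicator (Iic r) (fun y => Real.exp (-y^2/2)) y
      = ∫ y in (0:ℝ)..r, y^(d-1) * Real.exp (-y^2/2) := by
    have hptw : ∀ y : ℝ, y ^ (d-1) • Set.indicator (Iic r) (fun y => Real.exp (-y^2/2)) y
        = Set.indicator (Iic r) (fun y => y^(d-1) * Real.exp (-y^2/2)) y := by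
      intro y; by_cases h : y ∈ Iic r <;> simp [h]
    simp_rw [hptw]
    rw [setIntegral_indicator measurableSet_Iic, Set.Ioi_inter_Iic,
      intervalIntegral.integral_of_le hr.le]
  have hvol : (volume (ball (0:E d) 1)).toReal
      = Real.sqrt π ^ d / Real.Gamma ((d:ℝ)/2 + 1) := by
    rw [EuclideanSpace.volume_ball]
    simp [Fintype.card_fin, ENNReal.toReal_ofReal (by positivity : (0:ℝ) ≤ Real.sqrt π ^ d / Real.Gamma ((d:ℝ)/2 + 1))]
  rw [hind, hpolar, hIoi, sub_lemma d hd hr, measureReal_def, hvol]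
  -- scalar identity
  rw [nsmul_eq_mul, smul_eq_mul]
  have hΓpos : 0 < Real.Gamma ((d:ℝ)/2) := Real.Gamma_pos_of_pos hs
  have hΓ1 : Real.Gamma ((d:ℝ)/2 + 1) = ((d:ℝ)/2) * Real.Gamma ((d:ℝ)/2) :=
    Real.Gamma_add_one (ne_of_gt hs)
  have hsqrt : Real.sqrt π ^ d = π ^ ((d:ℝ)/2) := by
    rw [Real.sqrt_eq_rpow, ← Real.rpow_natCast (π ^ ((1:ℝ)/2)) d, ← Real.rpow_mul pi_pos.le]
    ring_nf
  have h2π : (2*π) ^ (-(d:ℝ)/2) = ((2:ℝ) ^ ((d:ℝ)/2) * π ^ ((d:ℝ)/2))⁻¹ := by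
    rw [neg_div, Real.rpow_neg (by positivity), Real.mul_rpow two_pos.le pi_pos.le]
  have h2s : (2:ℝ) ^ ((d:ℝ)/2 - 1) = (2:ℝ) ^ ((d:ℝ)/2) / 2 := by
    rw [Real.rpow_sub two_pos, Real.rpow_one]
  rw [hΓ1, hsqrt, h2π, h2s]
  have ha : (0:ℝ) < (2:ℝ) ^ ((d:ℝ)/2) := Real.rpow_pos_of_pos two_pos _
  have hb : (0:ℝ) < π ^ ((d:ℝ)/2) := Real.rpow_pos_of_pos pi_pos _
  field_simp

lemma lowerIncGamma_nonneg (s : ℝ) {x : ℝ} (hx : 0 ≤ x) : 0 ≤ lowerIncGamma s x := by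
  refine intervalIntegral.integral_nonneg hx (fun t ht => ?_)
  have := ht.1
  positivity

lemma stdGaussian_univ_ne_top (d : ℕ) : stdGaussian d Set.univ ≠ ⊤ := by
  rw [stdGaussian, withDensity_apply _ MeasurableSet.univ, Measure.restrict_univ,
    ← ofReal_integral_eq_lintegral_ofReal ((integrable_gauss d).const_mul _)
      (ae_of_all _ fun z => by positivity)]
  exact ENNReal.ofReal_ne_top

theorem stmt14 (d : ℕ) (hd : 1 ≤ d) (F Finv : E d → E d) (L₂ : ℝ) (hL₂ : 0 < L₂)
    (hbij : Function.Bijective F)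
    (hinv₁ : ∀ x, Finv (F x) = x) (hinv₂ : ∀ z, F (Finv z) = z)
    (hFinv : ∀ z₁ z₂, ‖Finv z₁ - Finv z₂‖ ≤ L₂ * ‖z₁ - z₂‖)
    (Pstar : Measure (E d)) [IsProbabilityMeasure Pstar]
    (Phat : Measure (E d)) (hPhat : ∀ A : Set (E d), MeasurableSet A → Phat A = stdGaussian d (F '' A)) :
    (∀ (R : ℝ), 0 < R →
      tvDist Pstar Phat ≥
        lowerIncGamma ((d : ℝ) / 2) (R ^ 2 / (2 * L₂ ^ 2)) / Real.Gamma ((d : ℝ) / 2) -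
          (Pstar (closedBall (Finv 0) R)).toReal) ∧
    ((∃ R : ℝ, 0 < R ∧
        (Pstar (closedBall (Finv 0) R)).toReal <
          lowerIncGamma ((d : ℝ) / 2) (R ^ 2 / (2 * L₂ ^ 2)) / Real.Gamma ((d : ℝ) / 2)) →
      0 < tvDist Pstar Phat) := by
  have hPhat_univ : Phat Set.univ = stdGaussian d Set.univ := by
    rw [hPhat _ MeasurableSet.univ, Set.image_univ, hbij.2.range_eq]
  have hPhat_top : Phat Set.univ ≠ ⊤ := hPhat_univ ▸ stdGaussian_univ_ne_top d
  have hbdd : BddAbove (Set.range fun A : {s : Set (E d) // MeasurableSet s} =>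
      |(Pstar A.1).toReal - (Phat A.1).toReal|) := by
    refine ⟨(Pstar Set.univ).toReal + (Phat Set.univ).toReal, ?_⟩
    rintro x ⟨A, rfl⟩
    have h1 : (Pstar A.1).toReal ≤ (Pstar Set.univ).toReal :=
      ENNReal.toReal_mono (measure_ne_top _ _) (measure_mono (Set.subset_univ _))
    have h2 : (Phat A.1).toReal ≤ (Phat Set.univ).toReal :=
      ENNReal.toReal_mono hPhat_top (measure_mono (Set.subset_univ _))
    calc |(Pstar A.1).toReal - (Phat A.1).toReal|
        ≤ |(Pstar A.1).toReal| + |(Phat A.1).toReal| := abs_sub _ _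
      _ = (Pstar A.1).toReal + (Phat A.1).toReal := by
          rw [abs_of_nonneg ENNReal.toReal_nonneg, abs_of_nonneg ENNReal.toReal_nonneg]
      _ ≤ _ := add_le_add h1 h2
  have hkey : ∀ (R : ℝ), 0 < R →
      tvDist Pstar Phat ≥
        lowerIncGamma ((d : ℝ) / 2) (R ^ 2 / (2 * L₂ ^ 2)) / Real.Gamma ((d : ℝ) / 2) -
          (Pstar (closedBall (Finv 0) R)).toReal := by
    intro R hR
    set A := closedBall (Finv 0) R with hA
    have hAmeas : MeasurableSet A := measurableSet_closedBall
    have hrpos : 0 < R / L₂ := div_pos hR hL₂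
    have hsub : closedBall (0 : E d) (R / L₂) ⊆ F '' A := by
      intro z hz
      refine ⟨Finv z, ?_, hinv₂ z⟩
      rw [hA, mem_closedBall, dist_eq_norm]
      calc ‖Finv z - Finv 0‖ ≤ L₂ * ‖z - 0‖ := hFinv z 0
        _ = L₂ * ‖z‖ := by rw [sub_zero]
        _ ≤ L₂ * (R / L₂) := by
            refine mul_le_mul_of_nonneg_left ?_ hL₂.le
            simpa [mem_closedBall_zero_iff] using hz
        _ = R := by field_simp
    have hballval := stdGaussian_closedBall d hd hrpos
    have hexp : (R / L₂)^2/2 = R ^ 2 / (2 * L₂ ^ 2) := by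
      field_simp
    rw [hexp] at hballval
    have hmono : stdGaussian d (closedBall (0 : E d) (R / L₂)) ≤ Phat A := by
      rw [hPhat A hAmeas]
      exact measure_mono hsub
    have hPhatA_top : Phat A ≠ ⊤ :=
      ne_top_of_le_ne_top hPhat_top (measure_mono (Set.subset_univ _))
    have hnn : 0 ≤ lowerIncGamma ((d : ℝ) / 2) (R ^ 2 / (2 * L₂ ^ 2)) / Real.Gamma ((d : ℝ) / 2) := by
      have hs : (0:ℝ) < (d:ℝ)/2 := by
        have : (0:ℝ) < (d:ℝ) := by exact_mod_cast hd
        linarith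
      exact div_nonneg (lowerIncGamma_nonneg _ (by positivity)) (Real.Gamma_pos_of_pos hs).le
    have h3 : lowerIncGamma ((d : ℝ) / 2) (R ^ 2 / (2 * L₂ ^ 2)) / Real.Gamma ((d : ℝ) / 2)
        ≤ (Phat A).toReal := by
      have := ENNReal.toReal_mono hPhatA_top hmono
      rwa [hballval, ENNReal.toReal_ofReal hnn] at this
    have h4 : (Phat A).toReal - (Pstar A).toReal ≤ tvDist Pstar Phat := by
      have h5 : (Phat A).toReal - (Pstar A).toReal
          ≤ |(Pstar A).toReal - (Phat A).toReal| := by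
        rw [abs_sub_comm]
        exact le_abs_self _
      exact h5.trans (le_ciSup hbdd ⟨A, hAmeas⟩)
    linarith
  refine ⟨hkey, ?_⟩
  rintro ⟨R, hR, hlt⟩
  have := hkey R hR
  linarith
end
end
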